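/- Let k be an algebraically closed field of characteristic 0, let h ∈ k[x] be a monic polynomial of odd degree 2m+1 ≥ 3 with h and h′ coprime, and let A = k[x, y]/⟨y² − 2h(x)⟩. Then for every non-zero η ∈ Der_k(A), the centralizer of η in Der_k(A) is one-dimensional: if ν ∈ Der_k(A) satisfies [η, ν] = 0, then ν = λ·η for some λ ∈ k (i.e., Ker ad(η) = k·η). -/

import Mathlib

set_option synthInstance.maxHeartbeats 400000
set_option maxHeartbeats 1000000

noncomputable section
open Polynomial

section Wron
variable {k : Type*} [Field k] [CharZero k]

lemma wronskian_zero_imp {a b : k[X]} (hb : b ≠ 0)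
    (hw : derivative a * b = a * derivative b) :
    ∃ c d : k, d ≠ 0 ∧ C d * a = C c * b := by
  classical
  rcases eq_or_ne a 0 with rfl | ha
  · exact ⟨0, 1, one_ne_zero, by simp⟩
  set d := GCDMonoid.gcd a b with hd
  have hd0 : d ≠ 0 := fun h0 => hb (by simpa using ((gcd_eq_zero_iff a b).mp h0).2)
  set a1 := a / d with ha1d
  set b1 := b / d with hb1d
  have ha1 : a = d * a1 := (EuclideanDomain.mul_div_cancel' hd0 (gcd_dvd_left a b)).symm
  have hb1 : b = d * b1 := (EuclideanDomain.mul_div_cancel' hd0 (gcd_dvd_right a b)).symm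
  have hcop : IsCoprime a1 b1 := isCoprime_div_gcd_div_gcd hb
  have hb10 : b1 ≠ 0 := fun h0 => hb (by rw [hb1, h0, mul_zero])
  have ha10 : a1 ≠ 0 := fun h0 => ha (by rw [ha1, h0, mul_zero])
  have hw1 : derivative a1 * b1 = a1 * derivative b1 := by
    have h2 : d * (d * (derivative a1 * b1)) = d * (d * (a1 * derivative b1)) := by
      rw [ha1, hb1] at hw
      simp only [derivative_mul] at hw
      linear_combination hw
    exact mul_left_cancel₀ hd0 (mul_left_cancel₀ hd0 h2)
  have hda1 : derivative a1 = 0 := by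
    rw [← Polynomial.dvd_derivative_iff]
    exact (hcop.dvd_of_dvd_mul_right ⟨derivative b1, hw1.symm ▸ rfl⟩ : a1 ∣ derivative a1)
  have hdb1 : derivative b1 = 0 := by
    rw [← Polynomial.dvd_derivative_iff]
    exact (hcop.symm.dvd_of_dvd_mul_right ⟨derivative a1, by linear_combination -hw1⟩ : b1 ∣ derivative b1)
  obtain ⟨ca, hca⟩ : ∃ ca : k, a1 = C ca := by
    refine ⟨a1.coeff 0, Polynomial.eq_C_of_natDegree_eq_zero ?_⟩
    exact Polynomial.natDegree_eq_zero_of_derivative_eq_zero hda1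
  obtain ⟨cb, hcb⟩ : ∃ cb : k, b1 = C cb := by
    refine ⟨b1.coeff 0, Polynomial.eq_C_of_natDegree_eq_zero ?_⟩
    exact Polynomial.natDegree_eq_zero_of_derivative_eq_zero hdb1
  refine ⟨ca, cb, fun h0 => hb10 (by rw [hcb, h0, map_zero]), ?_⟩
  rw [ha1, hb1, hca, hcb]; ring

end Wron

namespace HypC

variable {k : Type*} [Field k] [CharZero k] (h : k[X])

/-- The defining polynomial `Y² - 2h(x)` as an element of `k[x][Y]`. -/
def Pc : (k[X])[X] := X ^ 2 - C (2 * h)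

lemma monic_Pc : (Pc h).Monic := by
  have : degree (C (2 * h) : (k[X])[X]) < (2 : ℕ) := lt_of_le_of_lt degree_C_le (by norm_num)
  exact Polynomial.monic_X_pow_sub this

/-- The coordinate ring of the hyperelliptic curve. -/
abbrev Bc := AdjoinRoot (Pc h)

def xB : Bc h := AdjoinRoot.of _ X
def yB : Bc h := AdjoinRoot.root _
abbrev og : k[X] →+* Bc h := AdjoinRoot.of (Pc h)

lemma root_sq : (yB h) ^ 2 = og h (2 * h) := by
  have := AdjoinRoot.eval₂_root (Pc h)
  simp only [Pc, eval₂_sub, eval₂_X_pow, eval₂_C, sub_eq_zero] at this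
  rw [← sub_eq_zero]
  have hm : AdjoinRoot.mk (Pc h) (X ^ 2 - C (2 * h)) = 0 := AdjoinRoot.mk_self
  rw [map_sub, map_pow, AdjoinRoot.mk_X, AdjoinRoot.mk_C] at hm
  exact hm

lemma og_X : og h X = xB h := rfl

def c0 : Bc h → k[X] := fun b => (AdjoinRoot.modByMonicHom (monic_Pc h) b).coeff 0
def c1 : Bc h → k[X] := fun b => (AdjoinRoot.modByMonicHom (monic_Pc h) b).coeff 1

lemma natDegree_Pc : (Pc h).natDegree = 2 := by
  have h1 : natDegree (C (2 * h) : (k[X])[X]) < natDegree (X ^ 2 : (k[X])[X]) := by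
    rw [natDegree_C, natDegree_X_pow]; norm_num
  simpa [Pc, natDegree_X_pow] using natDegree_sub_eq_left_of_natDegree_lt h1

lemma mk_linear (p q : k[X]) : AdjoinRoot.mk (Pc h) (C p + C q * X) = og h p + og h q * yB h := by
  simp only [map_add, map_mul, AdjoinRoot.mk_C, AdjoinRoot.mk_X]
  rfl

lemma coords_mk (p q : k[X]) : c0 h (og h p + og h q * yB h) = p ∧ c1 h (og h p + og h q * yB h) = q := by
  rw [← mk_linear]
  have hdeg : degree (C p + C q * X) < degree (Pc h) := by
    have h1 : degree (C p + C q * X) ≤ 1 := by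
      refine le_trans (degree_add_le _ _) ?_
      simp only [sup_le_iff]
      constructor
      · exact le_trans degree_C_le (by norm_num)
      · exact le_trans (degree_mul_le _ _) (by
          simpa using add_le_add degree_C_le (le_refl (degree (X : (k[X])[X]))))
    have h2 : degree (Pc h) = 2 := by
      rw [degree_eq_natDegree (monic_Pc h).ne_zero, natDegree_Pc]
      rfl
    rw [h2]
    exact lt_of_le_of_lt h1 (by norm_num)
  have hmod : AdjoinRoot.modByMonicHom (monic_Pc h) (AdjoinRoot.mk (Pc h) (C p + C q * X))
      = C p + C q * X := by
    rw [AdjoinRoot.modByMonicHom_mk]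
    exact (Polynomial.modByMonic_eq_self_iff (monic_Pc h)).mpr hdeg
  constructor
  · show (AdjoinRoot.modByMonicHom (monic_Pc h) _).coeff 0 = p
    rw [hmod]; simp
  · show (AdjoinRoot.modByMonicHom (monic_Pc h) _).coeff 1 = q
    rw [hmod]; simp

lemma decomp (b : Bc h) : b = og h (c0 h b) + og h (c1 h b) * yB h := by
  rw [← mk_linear]
  conv_lhs => rw [← AdjoinRoot.mk_leftInverse (monic_Pc h) b]
  congr 1
  set q := AdjoinRoot.modByMonicHom (monic_Pc h) b with hq
  have hdeg : degree q ≤ 1 := by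
    have h2 : degree q < degree (Pc h) := by
      induction b using AdjoinRoot.induction_on with
      | ih p' =>
        rw [hq, AdjoinRoot.modByMonicHom_mk]
        exact Polynomial.degree_modByMonic_lt p' (monic_Pc h)
    rw [degree_eq_natDegree (monic_Pc h).ne_zero, natDegree_Pc] at h2
    exact Order.le_of_lt_succ (by exact_mod_cast h2)
  have h3 := Polynomial.eq_X_add_C_of_degree_le_one hdeg
  conv_lhs => rw [h3]
  show C (q.coeff 1) * X + C (q.coeff 0) = C (c0 h b) + C (c1 h b) * X
  rw [show c0 h b = q.coeff 0 from rfl, show c1 h b = q.coeff 1 from rfl]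
  ring

set_option linter.unusedSectionVars false

lemma c0_mk (p q : k[X]) : c0 h (og h p + og h q * yB h) = p := (coords_mk h p q).1
lemma c1_mk (p q : k[X]) : c1 h (og h p + og h q * yB h) = q := (coords_mk h p q).2

lemma mul_formula (p q r s : k[X]) :
    (og h p + og h q * yB h) * (og h r + og h s * yB h)
      = og h (p*r + 2*h*(q*s)) + og h (p*s + q*r) * yB h := by
  have h2 : yB h ^ 2 = 2 * og h h := by rw [root_sq, map_mul, map_ofNat]
  simp only [map_add, map_mul, map_ofNat]
  linear_combination (og h q * og h s) * h2

lemma eq_zero_iff (p q : k[X]) : og h p + og h q * yB h = 0 ↔ p = 0 ∧ q = 0 := by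
  constructor
  · intro h0
    have e0 : og h (0:k[X]) + og h (0:k[X]) * yB h = 0 := by simp
    constructor
    · have := c0_mk h p q; rw [h0, ← e0, c0_mk h 0 0] at this; exact this.symm
    · have := c1_mk h p q; rw [h0, ← e0, c1_mk h 0 0] at this; exact this.symm
  · rintro ⟨rfl, rfl⟩; simp

lemma add_form (p1 q1 p2 q2 : k[X]) :
    (og h p1 + og h q1 * yB h) + (og h p2 + og h q2 * yB h)
      = og h (p1 + p2) + og h (q1 + q2) * yB h := by
  rw [map_add, map_add]; ring

lemma coords_eq_iff (p q r s : k[X]) :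
    og h p + og h q * yB h = og h r + og h s * yB h ↔ p = r ∧ q = s := by
  constructor
  · intro he
    have h0 : og h (p - r) + og h (q - s) * yB h = 0 := by
      rw [map_sub, map_sub]; linear_combination he
    have := (eq_zero_iff h _ _).mp h0
    exact ⟨sub_eq_zero.mp this.1, sub_eq_zero.mp this.2⟩
  · rintro ⟨rfl, rfl⟩; rfl

lemma c0_add (a b : Bc h) : c0 h (a + b) = c0 h a + c0 h b := by
  unfold c0; rw [map_add, coeff_add]
lemma c1_add (a b : Bc h) : c1 h (a + b) = c1 h a + c1 h b := by
  unfold c1; rw [map_add, coeff_add]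
lemma c0_smul (l : k) (a : Bc h) : c0 h (l • a) = C l * c0 h a := by
  unfold c0
  rw [show l • a = (C l : k[X]) • a from (algebraMap_smul (k[X]) l a).symm, map_smul,
    Polynomial.coeff_smul, smul_eq_mul]
lemma c1_smul (l : k) (a : Bc h) : c1 h (l • a) = C l * c1 h a := by
  unfold c1
  rw [show l • a = (C l : k[X]) • a from (algebraMap_smul (k[X]) l a).symm, map_smul,
    Polynomial.coeff_smul, smul_eq_mul]

/-- The canonical vector field `D = y ∂/∂x + h'(x) ∂/∂y`. -/
def Dfun : Bc h → Bc h := fun b =>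
  og h (2*h*(derivative (c1 h b)) + (derivative h) * (c1 h b))
    + og h (derivative (c0 h b)) * yB h

lemma Dfun_mk (p q : k[X]) :
    Dfun h (og h p + og h q * yB h)
      = og h (2*h*(derivative q) + (derivative h) * q) + og h (derivative p) * yB h := by
  unfold Dfun
  rw [c0_mk, c1_mk]

def Dder : Derivation k (Bc h) (Bc h) where
  toFun := Dfun h
  map_add' a b := by
    show Dfun h (a + b) = Dfun h a + Dfun h b
    unfold Dfun
    rw [c0_add, c1_add]
    simp only [derivative_add, mul_add, map_add, add_mul]
    ring
  map_smul' l a := by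
    show Dfun h (l • a) = l • Dfun h a
    unfold Dfun
    rw [c0_smul, c1_smul]
    have hl : ∀ x : Bc h, l • x = og h (C l) * x := fun x => by
      rw [← algebraMap_smul (k[X]) l x, Algebra.smul_def, AdjoinRoot.algebraMap_eq,
        Polynomial.algebraMap_eq]
    rw [hl]
    simp only [derivative_C_mul, map_add, map_mul]
    ring
  map_one_eq_zero' := by
    show Dfun h 1 = 0
    have e1 : (1 : Bc h) = og h 1 + og h 0 * yB h := by simp
    rw [show Dfun h 1 = Dfun h (og h 1 + og h 0 * yB h) from by rw [← e1], Dfun_mk]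
    simp
  leibniz' a b := by
    show Dfun h (a * b) = a • Dfun h b + b • Dfun h a
    obtain ⟨p, q, rfl⟩ : ∃ p q, a = og h p + og h q * yB h := ⟨_, _, decomp h a⟩
    obtain ⟨r, s, rfl⟩ : ∃ r s, b = og h r + og h s * yB h := ⟨_, _, decomp h b⟩
    rw [mul_formula, Dfun_mk, Dfun_mk, Dfun_mk, smul_eq_mul, smul_eq_mul,
      mul_formula, mul_formula, add_form, coords_eq_iff]
    constructor
    · simp only [derivative_add, derivative_mul, derivative_ofNat]; ring
    · simp only [derivative_add, derivative_mul, derivative_ofNat]; ring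

lemma og_eq_aeval (p : k[X]) : og h p = Polynomial.aeval (xB h) p := by
  have : (og h : k[X] →+* Bc h) = ((Polynomial.aeval (xB h) : k[X] →ₐ[k] Bc h) : k[X] →+* Bc h) := by
    have h1 : og h = (algebraMap (k[X]) (Bc h)) := (AdjoinRoot.algebraMap_eq (Pc h)).symm
    rw [h1]
    have h2 : (algebraMap (k[X]) (Bc h)) = ((IsScalarTower.toAlgHom k (k[X]) (Bc h) : k[X] →ₐ[k] Bc h) : k[X] →+* Bc h) := rfl
    rw [h2]
    congr 1
    apply Polynomial.algHom_ext
    simp [xB]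
  exact DFunLike.congr_fun this p

lemma D_xB : Dder h (xB h) = yB h := by
  show Dfun h (xB h) = yB h
  have : xB h = og h X + og h 0 * yB h := by simp [og_X]
  rw [this, Dfun_mk]
  simp

lemma D_yB : Dder h (yB h) = og h (derivative h) := by
  show Dfun h (yB h) = og h (derivative h)
  have : yB h = og h 0 + og h 1 * yB h := by simp
  rw [this, Dfun_mk]
  simp

lemma adjoin_top : Algebra.adjoin k ({xB h, yB h} : Set (Bc h)) = ⊤ := by
  rw [eq_top_iff]
  intro b _
  rw [decomp h b]
  have hx : xB h ∈ Algebra.adjoin k ({xB h, yB h} : Set (Bc h)) :=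
    Algebra.subset_adjoin (by simp)
  have hy : yB h ∈ Algebra.adjoin k ({xB h, yB h} : Set (Bc h)) :=
    Algebra.subset_adjoin (by simp)
  have hog : ∀ p : k[X], og h p ∈ Algebra.adjoin k ({xB h, yB h} : Set (Bc h)) := by
    intro p
    rw [og_eq_aeval]
    exact Algebra.adjoin_mono (by simp) (Polynomial.aeval_mem_adjoin_singleton k (xB h))
  exact add_mem (hog _) (mul_mem (hog _) hy)

lemma derivation_ext {η₁ η₂ : Derivation k (Bc h) (Bc h)}
    (hx : η₁ (xB h) = η₂ (xB h)) (hy : η₁ (yB h) = η₂ (yB h)) : η₁ = η₂ := by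
  apply Derivation.ext_of_adjoin_eq_top _ (adjoin_top h)
  rintro z (rfl | rfl)
  · exact hx
  · exact hy

lemma chain_rule (η : Derivation k (Bc h) (Bc h)) (p : k[X]) :
    η (og h p) = og h (derivative p) * η (xB h) := by
  rw [og_eq_aeval, Derivation.map_aeval, ← og_eq_aeval, smul_eq_mul]

lemma constraint (η : Derivation k (Bc h) (Bc h)) :
    yB h * η (yB h) = og h (derivative h) * η (xB h) := by
  have h1 : η (yB h * yB h) = yB h * η (yB h) + yB h * η (yB h) := by
    rw [Derivation.leibniz]; rfl
  have h2 : yB h * yB h = og h (2 * h) := by rw [← pow_two]; exact root_sq h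
  have h3 : η (og h (2*h)) = og h (derivative (2*h)) * η (xB h) := chain_rule h η _
  have h4 : yB h * η (yB h) + yB h * η (yB h) = og h (2 * derivative h) * η (xB h) := by
    rw [← h1, h2, h3]
    congr 2
    simp [derivative_mul]
  have h5 : (2:k) • (yB h * η (yB h)) = (2:k) • (og h (derivative h) * η (xB h)) := by
    have e2 : ∀ z : Bc h, (2:k) • z = 2 * z := fun z => by
      rw [Algebra.smul_def, map_ofNat]
    rw [e2, e2]
    rw [show (2:Bc h) * (og h (derivative h) * η (xB h)) = og h 2 * og h (derivative h) * η (xB h)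
      from by rw [map_ofNat]; ring, ← map_mul]
    linear_combination h4
  exact smul_right_injective (Bc h) (two_ne_zero) h5

lemma exists_rep (hcop : IsCoprime h (derivative h)) (η : Derivation k (Bc h) (Bc h)) :
    ∃ f : Bc h, η = f • Dder h := by
  obtain ⟨u, v, huv⟩ := hcop
  -- scaled Bezout : (C 2⁻¹ * u) * (2*h) + v * h' = 1
  have huv2 : (C (2⁻¹:k) * u) * (2*h) + v * derivative h = 1 := by
    rw [← huv]
    have hc : (C (2⁻¹:k) * (2:k[X])) = 1 := by
      rw [← map_ofNat (C : k →+* k[X]) 2, ← C_mul, inv_mul_cancel₀ two_ne_zero, C_1]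
    calc (C (2⁻¹:k) * u) * (2*h) + v * derivative h
        = (C (2⁻¹:k) * (2:k[X])) * (u * h) + v * derivative h := by ring
      _ = u * h + v * derivative h := by rw [hc, one_mul]
  set U : Bc h := og h (C (2⁻¹:k) * u) * yB h with hU
  set V : Bc h := og h v with hV
  have hUV : U * yB h + V * og h (derivative h) = 1 := by
    have : U * yB h = og h ((C (2⁻¹:k) * u) * (2*h)) := by
      rw [hU, mul_assoc, ← pow_two, root_sq h]
      exact (map_mul _ _ _).symm
    rw [this, hV, ← map_mul, ← map_add, huv2, map_one]
  set a := η (xB h) with ha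
  set b := η (yB h) with hb
  have hcon : yB h * b = og h (derivative h) * a := constraint h η
  refine ⟨U * a + V * b, derivation_ext h ?_ ?_⟩
  · rw [Derivation.smul_apply, smul_eq_mul, D_xB]
    calc η (xB h) = a * 1 := by rw [mul_one]
      _ = a * (U * yB h + V * og h (derivative h)) := by rw [hUV]
      _ = U * a * yB h + V * (og h (derivative h) * a) := by ring
      _ = U * a * yB h + V * (yB h * b) := by rw [hcon]
      _ = (U * a + V * b) * yB h := by ring
  · rw [Derivation.smul_apply, smul_eq_mul, D_yB]
    calc η (yB h) = b * 1 := by rw [mul_one]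
      _ = b * (U * yB h + V * og h (derivative h)) := by rw [hUV]
      _ = U * (yB h * b) + V * b * og h (derivative h) := by ring
      _ = U * (og h (derivative h) * a) + V * b * og h (derivative h) := by rw [hcon]
      _ = (U * a + V * b) * og h (derivative h) := by ring

lemma bracket_rep (f g : Bc h) :
    ⁅f • Dder h, g • Dder h⁆ = (f * Dder h g - g * Dder h f) • Dder h := by
  ext z
  rw [Derivation.commutator_apply]
  simp only [Derivation.smul_apply, smul_eq_mul]
  rw [Derivation.leibniz, Derivation.leibniz]
  simp only [smul_eq_mul]
  ring

lemma smul_D_eq_zero (hmonic : h.Monic) {w : Bc h} (hw : w • Dder h = 0) : w = 0 := by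
  have h1 : w * yB h = 0 := by
    have h0 : (w • Dder h) (xB h) = (0 : Derivation k (Bc h) (Bc h)) (xB h) := by rw [hw]
    simpa [D_xB] using h0
  have h2 : w * og h (2*h) = 0 := by
    rw [← root_sq h, pow_two, ← mul_assoc, h1, zero_mul]
  rw [decomp h w] at h2
  rw [show og h (2*h) = og h (2*h) + og h 0 * yB h from by simp, mul_formula] at h2
  obtain ⟨e1, e2⟩ := (eq_zero_iff h _ _).mp h2
  have h2h : (2*h : k[X]) ≠ 0 := by
    simp [hmonic.ne_zero]
  have hc0 : c0 h w = 0 := by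
    have : c0 h w * (2*h) = 0 := by linear_combination e1
    rcases mul_eq_zero.mp this with h' | h'
    · exact h'
    · exact absurd h' h2h
  have hc1 : c1 h w = 0 := by
    have : c1 h w * (2*h) = 0 := by linear_combination e2
    rcases mul_eq_zero.mp this with h' | h'
    · exact h'
    · exact absurd h' h2h
  rw [decomp h w, hc0, hc1]
  simp

lemma Dder_apply (z : Bc h) : Dder h z = Dfun h z := rfl

lemma og_mul_form (n c d : k[X]) :
    og h n * (og h c + og h d * yB h) = og h (n*c) + og h (n*d) * yB h := by
  rw [map_mul, map_mul]; ring

lemma mul_og_cancel {n : k[X]} (hn : n ≠ 0) {z : Bc h} (hz : z * og h n = 0) : z = 0 := by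
  rw [decomp h z, show (og h n : Bc h) = og h n + og h 0 * yB h from by simp, mul_formula] at hz
  obtain ⟨e1, e2⟩ := (eq_zero_iff h _ _).mp hz
  have hc0 : c0 h z = 0 := by
    have : c0 h z * n = 0 := by linear_combination e1
    exact (mul_eq_zero.mp this).resolve_right hn
  have hc1 : c1 h z = 0 := by
    have : c1 h z * n = 0 := by linear_combination e2
    exact (mul_eq_zero.mp this).resolve_right hn
  rw [decomp h z, hc0, hc1]; simp

lemma N_ne_zero {m : ℕ} (hmonic : h.Monic) (hdeg : h.natDegree = 2*m+1)
    {p q : k[X]} (hpq : ¬(p = 0 ∧ q = 0)) : p^2 - 2*h*q^2 ≠ 0 := by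
  intro hN
  rcases eq_or_ne q 0 with rfl | hq
  · have : p = 0 := by
      have : p^2 = 0 := by linear_combination hN
      exact pow_eq_zero_iff (by norm_num) |>.mp this
    exact hpq ⟨this, rfl⟩
  · have hp2 : p^2 = C (2:k) * (h * q^2) := by rw [map_ofNat]; linear_combination hN
    have hp : p ≠ 0 := by
      rintro rfl
      have : C (2:k) * (h * q^2) = 0 := by linear_combination -hp2
      rcases mul_eq_zero.mp this with h' | h'
      · exact two_ne_zero (by simpa using h')
      · rcases mul_eq_zero.mp h' with h'' | h''
        · exact hmonic.ne_zero h''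
        · exact hq (pow_eq_zero_iff (by norm_num) |>.mp h'')
    have hdegs := congrArg natDegree hp2
    rw [natDegree_pow, natDegree_C_mul two_ne_zero,
      natDegree_mul hmonic.ne_zero (pow_ne_zero _ hq), natDegree_pow, hdeg] at hdegs
    omega

lemma core {m : ℕ} (hmonic : h.Monic) (hdeg : h.natDegree = 2*m+1)
    {f g : Bc h} (hf : f ≠ 0) (hfg : f * Dder h g = g * Dder h f) :
    ∃ l : k, g = algebraMap k (Bc h) l * f := by
  set p := c0 h f with hp
  set q := c1 h f with hq
  set r := c0 h g with hr
  set s := c1 h g with hs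
  have hdf : f = og h p + og h q * yB h := decomp h f
  have hdg : g = og h r + og h s * yB h := decomp h g
  set N := p^2 - 2*h*q^2 with hN
  have hpq : ¬(p = 0 ∧ q = 0) := by
    rintro ⟨h0, h1⟩
    apply hf
    rw [hdf, h0, h1]; simp
  have hN0 : N ≠ 0 := N_ne_zero h hmonic hdeg hpq
  set fbar : Bc h := og h p + og h (-q) * yB h with hfbar
  set M := r*p - 2*h*(s*q) with hM
  set W := s*p - r*q with hW
  have hF : f * fbar = og h N := by
    rw [hdf, hfbar, mul_formula, show p*(-q) + q*p = 0 from by ring, map_zero, zero_mul,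
      add_zero]
    congr 1
    rw [hN]; ring
  have hG : g * fbar = og h M + og h W * yB h := by
    rw [hdg, hfbar, mul_formula]
    congr 2
    · rw [hM]; ring
    · rw [hW]; ring
  have hFDG : f * fbar * Dder h (g * fbar) = g * fbar * Dder h (f * fbar) := by
    rw [Derivation.leibniz, Derivation.leibniz]
    simp only [smul_eq_mul]
    linear_combination (fbar^2) * hfg
  have e1 : Dder h (og h M + og h W * yB h)
      = og h (2*h*derivative W + derivative h * W) + og h (derivative M) * yB h := by
    rw [Dder_apply, Dfun_mk]
  have e2 : Dder h (og h N) = og h (derivative N) * yB h := by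
    conv_lhs => rw [show (og h N : Bc h) = og h N + og h 0 * yB h from by simp]
    rw [Dder_apply, Dfun_mk]
    simp
  have hL : f * fbar * Dder h (g * fbar)
      = og h (N*(2*h*derivative W + derivative h * W)) + og h (N*derivative M) * yB h := by
    rw [hF, hG, e1, og_mul_form]
  have hR : g * fbar * Dder h (f * fbar)
      = og h (2*h*(W*derivative N)) + og h (M*derivative N) * yB h := by
    rw [hF, hG, e2,
      show og h (derivative N) * yB h = og h 0 + og h (derivative N) * yB h from by simp,
      mul_formula]
    congr 2 <;> ring
  rw [hL, hR] at hFDG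
  obtain ⟨I1, I2⟩ := (coords_eq_iff h _ _ _ _).mp hFDG
  -- W = 0
  have hWN : derivative (W^2*h) * N^2 = (W^2*h) * derivative (N^2) := by
    have I1' := I1
    simp only [hW, hN, derivative_sub, derivative_mul, derivative_pow, Nat.cast_ofNat,
      map_ofNat, derivative_ofNat] at I1' ⊢
    linear_combination ((p^2 - 2*h*q^2)*(s*p - r*q)) * I1'
  have hWzero : W = 0 := by
    by_contra hW0
    have hN2 : (N^2 : k[X]) ≠ 0 := pow_ne_zero _ hN0
    obtain ⟨c, d, hd, hcd⟩ := wronskian_zero_imp hN2 hWN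
    have hWh : (W^2*h : k[X]) ≠ 0 :=
      mul_ne_zero (pow_ne_zero _ hW0) hmonic.ne_zero
    have hc : c ≠ 0 := by
      rintro rfl
      simp only [map_zero, zero_mul] at hcd
      rcases mul_eq_zero.mp hcd with h' | h'
      · exact hd (by simpa using h')
      · exact hWh h'
    have hdegs := congrArg natDegree hcd
    rw [natDegree_C_mul hd, natDegree_C_mul hc, natDegree_mul (pow_ne_zero _ hW0) hmonic.ne_zero,
      natDegree_pow, natDegree_pow, hdeg] at hdegs
    omega
  -- M = l * N
  obtain ⟨l, hl⟩ : ∃ l : k, M = C l * N := by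
    obtain ⟨c, d, hd, hcd⟩ := wronskian_zero_imp hN0
      (show derivative M * N = M * derivative N from by linear_combination I2)
    refine ⟨d⁻¹ * c, ?_⟩
    have := congrArg (fun z => C (d⁻¹:k) * z) hcd
    simp only [← mul_assoc, ← C_mul, inv_mul_cancel₀ hd, C_1, one_mul] at this
    rw [this, C_mul]
  refine ⟨l, ?_⟩
  have halg : algebraMap k (Bc h) l = og h (C l) := by
    rw [IsScalarTower.algebraMap_apply k (k[X]) (Bc h), AdjoinRoot.algebraMap_eq,
      Polynomial.algebraMap_eq]
  have hzero : (g - algebraMap k (Bc h) l * f) * og h N = 0 := by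
    have step : (g - algebraMap k (Bc h) l * f) * og h N
        = f * (g * fbar) - algebraMap k (Bc h) l * f * (f * fbar) := by
      rw [← hF]; ring
    rw [step, hG, hWzero, hl, hF, halg, map_zero, zero_mul, add_zero, map_mul]
    ring
  have := mul_og_cancel h hN0 hzero
  linear_combination this

lemma centralizer_B {m : ℕ} (hmonic : h.Monic) (hdeg : h.natDegree = 2*m+1)
    (hcop : IsCoprime h (derivative h))
    (η ν : Derivation k (Bc h) (Bc h)) (hη : η ≠ 0) (hcomm : ⁅η, ν⁆ = 0) :
    ∃ l : k, ν = l • η := by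
  obtain ⟨f, rfl⟩ := exists_rep h hcop η
  obtain ⟨g, rfl⟩ := exists_rep h hcop ν
  have hf : f ≠ 0 := fun h0 => hη (by rw [h0, zero_smul])
  rw [bracket_rep] at hcomm
  have hz := smul_D_eq_zero h hmonic hcomm
  have hfg : f * Dder h g = g * Dder h f := by
    have := sub_eq_zero.mp hz
    linear_combination this
  obtain ⟨l, hl⟩ := core h hmonic hdeg hf hfg
  refine ⟨l, ?_⟩
  rw [hl, ← Algebra.smul_def, smul_assoc]

end HypC

section Push

variable {k A1 A2 : Type*} [CommRing k] [CommRing A1] [CommRing A2]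
  [Algebra k A1] [Algebra k A2]

/-- Pushforward of a derivation along an algebra equivalence. -/
def pushDer (e : A1 ≃ₐ[k] A2) (η : Derivation k A1 A1) : Derivation k A2 A2 where
  toLinearMap := (e.toLinearMap.comp η.toLinearMap).comp e.symm.toLinearMap
  map_one_eq_zero' := by simp
  leibniz' a b := by
    show e (η (e.symm (a * b))) = a • e (η (e.symm b)) + b • e (η (e.symm a))
    rw [map_mul, Derivation.leibniz, map_add, smul_eq_mul, map_mul, smul_eq_mul, map_mul,
      e.apply_symm_apply, e.apply_symm_apply, smul_eq_mul, smul_eq_mul]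

lemma pushDer_apply (e : A1 ≃ₐ[k] A2) (η : Derivation k A1 A1) (x : A2) :
    pushDer e η x = e (η (e.symm x)) := rfl

lemma pushDer_bracket (e : A1 ≃ₐ[k] A2) (η ν : Derivation k A1 A1) :
    pushDer e ⁅η, ν⁆ = ⁅pushDer e η, pushDer e ν⁆ := by
  ext z
  rw [Derivation.commutator_apply, pushDer_apply, Derivation.commutator_apply]
  simp only [pushDer_apply, AlgEquiv.symm_apply_apply, map_sub]

lemma pushDer_zero_iff (e : A1 ≃ₐ[k] A2) (η : Derivation k A1 A1) :
    pushDer e η = 0 ↔ η = 0 := by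
  constructor
  · intro h0
    ext z
    have := DFunLike.congr_fun h0 (e z)
    simp only [pushDer_apply, AlgEquiv.symm_apply_apply, Derivation.zero_apply] at this
    simpa using e.injective (by simpa using this)
  · rintro rfl
    ext z
    simp [pushDer_apply]

lemma pushDer_smul_back (e : A1 ≃ₐ[k] A2) (η ν : Derivation k A1 A1) (l : k)
    (hp : pushDer e ν = l • pushDer e η) : ν = l • η := by
  ext z
  have := DFunLike.congr_fun hp (e z)
  simp only [pushDer_apply, AlgEquiv.symm_apply_apply, Derivation.smul_apply] at this
  apply e.injective
  rw [this]
  simp [map_smul]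

end Push

open HypC

/-- On a non-singular hyperelliptic curve `y² = 2h(x)`, the centralizer of a non-zero vector
field `η` in the Lie algebra of vector fields is `k·η`. -/
theorem hyperelliptic_centralizer_one_dimensional
    (k : Type*) [Field k] [IsAlgClosed k] [CharZero k]
    (m : ℕ) (hm : 1 ≤ m)
    (h : Polynomial k) (hmonic : h.Monic) (hdeg : h.natDegree = 2 * m + 1)
    (hcop : IsCoprime h (Polynomial.derivative h))
    (I : Ideal (MvPolynomial (Fin 2) k))
    (hI : I = Ideal.span {MvPolynomial.X 1 ^ 2 -
      2 * Polynomial.aeval (MvPolynomial.X 0) h})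
    (η ν : Derivation k (MvPolynomial (Fin 2) k ⧸ I) (MvPolynomial (Fin 2) k ⧸ I))
    (hη : η ≠ 0) (hcomm : ⁅η, ν⁆ = 0) :
    ∃ l : k, ν = l • η := by
  classical
  set Amv := MvPolynomial (Fin 2) k
  -- the algebra map to the AdjoinRoot model
  set φ : Amv →ₐ[k] Bc h := MvPolynomial.aeval ![xB h, yB h] with hφ
  have hφ0 : φ (MvPolynomial.X 0) = xB h := by rw [hφ, MvPolynomial.aeval_X]; rfl
  have hφ1 : φ (MvPolynomial.X 1) = yB h := by rw [hφ, MvPolynomial.aeval_X]; rfl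
  have hφaeval : ∀ p : k[X], φ (Polynomial.aeval (MvPolynomial.X 0) p) = og h p := by
    intro p
    rw [← Polynomial.aeval_algHom_apply, hφ0, ← og_eq_aeval]
  set gen : Amv := MvPolynomial.X 1 ^ 2 - 2 * Polynomial.aeval (MvPolynomial.X 0) h with hgen
  have hφgen : φ gen = 0 := by
    rw [hgen, map_sub, map_pow, map_mul, hφ1, hφaeval, root_sq, map_ofNat, map_mul, map_ofNat]
    ring
  -- the inverse ring hom
  have hyA : Polynomial.eval₂ ((Polynomial.aeval (Ideal.Quotient.mk I (MvPolynomial.X 0)) :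
      k[X] →ₐ[k] Amv ⧸ I) : k[X] →+* Amv ⧸ I) (Ideal.Quotient.mk I (MvPolynomial.X 1)) (Pc h)
      = 0 := by
    rw [Pc, Polynomial.eval₂_sub, Polynomial.eval₂_X_pow, Polynomial.eval₂_C]
    have : (Polynomial.aeval ((Ideal.Quotient.mk I) (MvPolynomial.X 0))) (2 * h)
        = Ideal.Quotient.mk I (2 * Polynomial.aeval (MvPolynomial.X 0) h) := by
      have key := Polynomial.aeval_algHom_apply (Ideal.Quotient.mkₐ k I)
        (MvPolynomial.X 0) (2*h)
      simpa [map_mul, map_ofNat] using key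
    show (Ideal.Quotient.mk I (MvPolynomial.X 1))^2 - (Polynomial.aeval ((Ideal.Quotient.mk I) (MvPolynomial.X 0))) (2 * h) = 0
    rw [this, ← map_pow, ← map_sub, Ideal.Quotient.eq_zero_iff_mem, ← hgen, hI]
    exact Ideal.subset_span rfl
  set ψ : Bc h →+* Amv ⧸ I := AdjoinRoot.lift _ _ hyA with hψ
  have hψog : ∀ p : k[X], ψ (og h p) =
      Polynomial.aeval (Ideal.Quotient.mk I (MvPolynomial.X 0)) p := by
    intro p
    exact AdjoinRoot.lift_of hyA
  have hψy : ψ (yB h) = Ideal.Quotient.mk I (MvPolynomial.X 1) := AdjoinRoot.lift_root hyA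
  have hcompose : ∀ F : Amv, ψ (φ F) = Ideal.Quotient.mk I F := by
    intro F
    have : (ψ.comp (φ : Amv →+* Bc h)) = (Ideal.Quotient.mk I : Amv →+* Amv ⧸ I) := by
      apply MvPolynomial.ringHom_ext
      · intro a
        simp only [RingHom.coe_comp, Function.comp_apply]
        have h1 : (φ : Amv →+* Bc h) (MvPolynomial.C a) = og h (Polynomial.C a) := by
          show φ (MvPolynomial.C a) = og h (Polynomial.C a)
          rw [show (MvPolynomial.C a : Amv) = Polynomial.aeval (MvPolynomial.X 0)
            (Polynomial.C a) from by simp, hφaeval]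
        rw [h1, hψog]
        rw [Polynomial.aeval_C, IsScalarTower.algebraMap_apply k Amv (Amv ⧸ I),
          Ideal.Quotient.algebraMap_eq, MvPolynomial.algebraMap_eq]
      · intro i
        fin_cases i
        · simp only [RingHom.coe_comp, Function.comp_apply]
          show ψ (φ (MvPolynomial.X 0)) = _
          rw [hφ0, show xB h = og h Polynomial.X from rfl, hψog]
          rw [Polynomial.aeval_X]
          rfl
        · simp only [RingHom.coe_comp, Function.comp_apply]
          show ψ (φ (MvPolynomial.X 1)) = _
          rw [hφ1, hψy]
          rfl
    exact DFunLike.congr_fun this F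
  have hker : RingHom.ker (φ : Amv →+* Bc h) = I := by
    ext F
    constructor
    · intro hF
      have : ψ (φ F) = 0 := by rw [show φ F = 0 from hF, map_zero]
      rw [hcompose] at this
      exact (Ideal.Quotient.eq_zero_iff_mem).mp this
    · intro hF
      rw [hI, Ideal.mem_span_singleton] at hF
      obtain ⟨c, hc⟩ := hF
      show φ F = 0
      rw [hc, map_mul, hφgen, zero_mul]
  have hsurj : Function.Surjective φ := by
    intro b
    refine ⟨Polynomial.aeval (MvPolynomial.X 0) (c0 h b)
      + Polynomial.aeval (MvPolynomial.X 0) (c1 h b) * MvPolynomial.X 1, ?_⟩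
    rw [map_add, map_mul, hφaeval, hφaeval, hφ1, ← decomp]
  -- the algebra equivalence
  set E : (Amv ⧸ I) ≃ₐ[k] Bc h :=
    (Ideal.quotientEquivAlgOfEq k hker.symm).trans
      (Ideal.quotientKerAlgEquivOfSurjective hsurj) with hE
  -- transport
  have hbr : ⁅pushDer E η, pushDer E ν⁆ = 0 := by
    rw [← pushDer_bracket, hcomm]
    ext z; simp [pushDer_apply]
  have hne : pushDer E η ≠ 0 := fun h0 => hη ((pushDer_zero_iff E η).mp h0)
  obtain ⟨l, hl⟩ := centralizer_B h hmonic hdeg hcop (pushDer E η) (pushDer E ν) hne hbr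
  exact ⟨l, pushDer_smul_back E η ν l hl⟩
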